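/- Let H be a Hilbert space and let w : H → H be a Hilbert–Schmidt operator whose Hilbert–Schmidt norm satisfies ‖w‖_HS ≤ √n. If there exists an n-dimensional subspace F of H such that w restricted to F is the identity on F, then w has rank at most n. -/

import Mathlib

open scoped InnerProductSpace ENNReal NNReal

section Aux

variable {H : Type*} [NormedAddCommGroup H] [InnerProductSpace ℂ H] [CompleteSpace H]
  {ι : Type*}

/-- Parseval's identity, real version. -/
lemma aux_parseval (b : HilbertBasis ι ℂ H) (x : H) :
    HasSum (fun i => ‖⟪b i, x⟫_ℂ‖ ^ 2) (‖x‖ ^ 2) := by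
  have h := b.hasSum_inner_mul_inner x x
  have h2 := (Complex.reCLM : ℂ →L[ℝ] ℝ).hasSum h
  simp only [Complex.reCLM_apply] at h2
  have e1 : ∀ i, (⟪x, b i⟫_ℂ * ⟪b i, x⟫_ℂ).re = ‖⟪b i, x⟫_ℂ‖ ^ 2 := by
    intro i
    rw [← inner_conj_symm x (b i), RCLike.conj_mul]
    norm_cast
  have e2 : (⟪x, x⟫_ℂ).re = ‖x‖ ^ 2 := by
    rw [inner_self_eq_norm_sq_to_K (𝕜 := ℂ)]
    norm_cast
  rw [e2] at h2
  exact h2.congr_fun fun i => (e1 i).symm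

/-- Parseval's identity, `ℝ≥0∞` version. -/
lemma aux_parseval' (b : HilbertBasis ι ℂ H) (x : H) :
    ∑' i, ENNReal.ofReal (‖⟪b i, x⟫_ℂ‖ ^ 2) = ENNReal.ofReal (‖x‖ ^ 2) := by
  rw [← ENNReal.ofReal_tsum_of_nonneg (fun i => by positivity) (aux_parseval b x).summable,
    (aux_parseval b x).tsum_eq]

/-- Bessel's inequality, `ℝ≥0∞` version. -/
lemma aux_bessel' {α : Type*} {v : α → H} (hv : Orthonormal ℂ v) (x : H) :
    ∑' a, ENNReal.ofReal (‖⟪v a, x⟫_ℂ‖ ^ 2) ≤ ENNReal.ofReal (‖x‖ ^ 2) := by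
  rw [← ENNReal.ofReal_tsum_of_nonneg (fun a => by positivity)
    (hv.inner_products_summable x)]
  exact ENNReal.ofReal_le_ofReal (hv.tsum_inner_products_le x)

/-- The Hilbert–Schmidt sum of `w` equals that of its adjoint. -/
lemma aux_adjoint_swap (b : HilbertBasis ι ℂ H) (w : H →L[ℂ] H) :
    ∑' i, ENNReal.ofReal (‖w (b i)‖ ^ 2)
      = ∑' j, ENNReal.ofReal (‖(ContinuousLinearMap.adjoint w) (b j)‖ ^ 2) := by
  calc ∑' i, ENNReal.ofReal (‖w (b i)‖ ^ 2)
      = ∑' i, ∑' j, ENNReal.ofReal (‖⟪b j, w (b i)⟫_ℂ‖ ^ 2) := by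
        simp_rw [aux_parseval' b]
    _ = ∑' j, ∑' i, ENNReal.ofReal (‖⟪b i, (ContinuousLinearMap.adjoint w) (b j)⟫_ℂ‖ ^ 2) := by
        rw [ENNReal.tsum_comm]
        congr 1; funext j; congr 1; funext i
        rw [← ContinuousLinearMap.adjoint_inner_left, norm_inner_symm]
    _ = ∑' j, ENNReal.ofReal (‖(ContinuousLinearMap.adjoint w) (b j)‖ ^ 2) := by
        simp_rw [aux_parseval' b]

/-- Sum of `‖w (v a)‖²` over any orthonormal family is at most the Hilbert–Schmidt sum. -/
lemma aux_bound (b : HilbertBasis ι ℂ H) (w : H →L[ℂ] H) {α : Type*} {v : α → H}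
    (hv : Orthonormal ℂ v) :
    ∑' a, ENNReal.ofReal (‖w (v a)‖ ^ 2) ≤ ∑' i, ENNReal.ofReal (‖w (b i)‖ ^ 2) := by
  calc ∑' a, ENNReal.ofReal (‖w (v a)‖ ^ 2)
      = ∑' a, ∑' j, ENNReal.ofReal (‖⟪b j, w (v a)⟫_ℂ‖ ^ 2) := by
        simp_rw [aux_parseval' b]
    _ = ∑' j, ∑' a, ENNReal.ofReal (‖⟪v a, (ContinuousLinearMap.adjoint w) (b j)⟫_ℂ‖ ^ 2) := by
        rw [ENNReal.tsum_comm]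
        congr 1; funext j; congr 1; funext a
        rw [← ContinuousLinearMap.adjoint_inner_left, norm_inner_symm]
    _ ≤ ∑' j, ENNReal.ofReal (‖(ContinuousLinearMap.adjoint w) (b j)‖ ^ 2) :=
        ENNReal.tsum_le_tsum fun j => aux_bessel' hv _
    _ = ∑' i, ENNReal.ofReal (‖w (b i)‖ ^ 2) := by
        rw [aux_adjoint_swap b (ContinuousLinearMap.adjoint w),
          ContinuousLinearMap.adjoint_adjoint]

end Aux

/-- If `w` is a Hilbert–Schmidt operator on a complex Hilbert space `H`
(Hilbert–Schmidt norm computed via a Hilbert basis `b`) with `‖w‖_HS ≤ √n`, and `w`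
restricts to the identity on an `n`-dimensional subspace `F`, then `w` has rank at most `n`. -/
theorem stmt0 {H : Type*} [NormedAddCommGroup H] [InnerProductSpace ℂ H] [CompleteSpace H]
    {ι : Type*} (b : HilbertBasis ι ℂ H) (w : H →L[ℂ] H) (n : ℕ) (hn : 0 < n)
    (hsum : Summable (fun i => ‖w (b i)‖ ^ 2))
    (hHS : ∑' i, ‖w (b i)‖ ^ 2 ≤ (n : ℝ))
    (F : Submodule ℂ H) (hF : Module.finrank ℂ F = n)
    (hfix : ∀ x ∈ F, w x = x) :
    Module.rank ℂ ↥(LinearMap.range (w : H →ₗ[ℂ] H)) ≤ n := by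
  haveI : FiniteDimensional ℂ F := FiniteDimensional.of_finrank_pos (hF ▸ hn)
  -- orthonormal basis of F, reindexed by Fin n
  let e : OrthonormalBasis (Fin n) ℂ F :=
    (stdOrthonormalBasis ℂ F).reindex (finCongr hF)
  -- the Hilbert–Schmidt sum is at most n
  have hHS' : ∑' i, ENNReal.ofReal (‖w (b i)‖ ^ 2) ≤ (n : ℝ≥0∞) := by
    rw [← ENNReal.ofReal_tsum_of_nonneg (fun i => by positivity) hsum]
    calc ENNReal.ofReal (∑' i, ‖w (b i)‖ ^ 2) ≤ ENNReal.ofReal (n : ℝ) :=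
          ENNReal.ofReal_le_ofReal hHS
      _ = (n : ℝ≥0∞) := ENNReal.ofReal_natCast n
  -- w vanishes on Fᗮ
  have hker : ∀ y ∈ Fᗮ, w y = 0 := by
    intro y hy
    rcases eq_or_ne y 0 with rfl | hy0
    · simp
    set u : H := ‖y‖⁻¹ • y with hu_def
    have hny : ‖y‖ ≠ 0 := norm_ne_zero_iff.mpr hy0
    have hu_mem : u ∈ Fᗮ := Fᗮ.smul_mem _ hy
    have hu_norm : ‖u‖ = 1 := by
      rw [hu_def, norm_smul, norm_inv, norm_norm, inv_mul_cancel₀ hny]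
    set v : Fin (n + 1) → H := Fin.snoc (fun k => (e k : H)) u with hv_def
    have hv : Orthonormal ℂ v := by
      rw [orthonormal_iff_ite]
      intro i j
      refine Fin.lastCases ?_ (fun i => ?_) i
      · refine Fin.lastCases ?_ (fun j => ?_) j
        · simp only [hv_def, Fin.snoc_last, if_pos rfl]
          rw [inner_self_eq_norm_sq_to_K, hu_norm]; norm_num
        · simp only [hv_def, Fin.snoc_last, Fin.snoc_castSucc]
          rw [if_neg (by simp [Fin.ext_iff, (Fin.castSucc_lt_last j).ne'])]
          rw [inner_eq_zero_symm]
          exact Submodule.inner_right_of_mem_orthogonal (e j).2 hu_mem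
      · refine Fin.lastCases ?_ (fun j => ?_) j
        · simp only [hv_def, Fin.snoc_last, Fin.snoc_castSucc]
          rw [if_neg (by simp [Fin.ext_iff, (Fin.castSucc_lt_last i).ne])]
          exact Submodule.inner_right_of_mem_orthogonal (e i).2 hu_mem
        · simp only [hv_def, Fin.snoc_castSucc]
          have := orthonormal_iff_ite.mp e.orthonormal i j
          rw [Submodule.coe_inner] at this
          rw [this]
          simp [Fin.ext_iff, Fin.castSucc_inj]
    have hb := (aux_bound b w hv).trans hHS'
    have hsum_eq : ∑' a, ENNReal.ofReal (‖w (v a)‖ ^ 2)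
        = (n : ℝ≥0∞) + ENNReal.ofReal (‖w u‖ ^ 2) := by
      rw [tsum_fintype, Fin.sum_univ_castSucc]
      have h1 : ∀ k : Fin n, ENNReal.ofReal (‖w (v k.castSucc)‖ ^ 2) = 1 := by
        intro k
        have hk : w (e k : H) = (e k : H) := hfix _ (e k).2
        have hnk : ‖(e k : H)‖ = 1 := by
          rw [Submodule.norm_coe]
          exact e.orthonormal.1 k
        simp [hv_def, Fin.snoc_castSucc, hk, hnk]
      simp only [h1, Finset.sum_const, Finset.card_univ, Fintype.card_fin, nsmul_eq_mul, mul_one]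
      simp [hv_def, Fin.snoc_last]
    rw [hsum_eq] at hb
    have hb2 : ENNReal.ofReal (‖w u‖ ^ 2) ≤ 0 := by
      have := ENNReal.le_of_add_le_add_left (by simp : (n : ℝ≥0∞) ≠ ⊤)
        (le_of_le_of_eq hb (by rw [add_zero]) : (n : ℝ≥0∞) + ENNReal.ofReal (‖w u‖ ^ 2)
          ≤ (n : ℝ≥0∞) + 0)
      exact this
    have hwu : w u = 0 := by
      have : ‖w u‖ ^ 2 ≤ 0 := by
        by_contra hc
        push_neg at hc
        exact (ENNReal.ofReal_pos.mpr hc).not_ge hb2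
      have : ‖w u‖ = 0 := by nlinarith [norm_nonneg (w u), sq_nonneg ‖w u‖]
      exact norm_eq_zero.mp this
    have : w u = ‖y‖⁻¹ • w y := by rw [hu_def, w.map_smul_of_tower]
    rw [this] at hwu
    rcases smul_eq_zero.mp hwu with h | h
    · exact absurd h (inv_ne_zero hny)
    · exact h
  -- range of w is contained in F
  have hle : LinearMap.range (w : H →ₗ[ℂ] H) ≤ F := by
    rintro _ ⟨x, rfl⟩
    have hdecomp : (x : H) = (F.orthogonalProjectionOnto x : H) + (x - F.orthogonalProjectionOnto x) := by
      abel
    have : w x = w (F.orthogonalProjectionOnto x : H) + w (x - F.orthogonalProjectionOnto x) := by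
      conv_lhs => rw [hdecomp]
      rw [map_add]
    show w x ∈ F
    rw [this, hfix _ (F.orthogonalProjectionOnto x).2,
      hker (x - (F.orthogonalProjectionOnto x : H)) (F.sub_starProjection_mem_orthogonal x), add_zero]
    exact (F.orthogonalProjectionOnto x).2
  calc Module.rank ℂ ↥(LinearMap.range (w : H →ₗ[ℂ] H))
      ≤ Module.rank ℂ F := Submodule.rank_mono hle
    _ = n := by rw [← Module.finrank_eq_rank, hF]
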